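/- Let γ > 0 and τ > 0. For every t ≥ 0, the convolution of the input signal erf(t/γ) with the second-order filter impulse response h(t) = (t/τ²)·e^{−t/τ} equals: ∫₀ᵗ erf(λ/γ)·((t−λ)/τ²)·e^{−(t−λ)/τ} dλ = erf(t/γ) + (e^{−t/τ}/τ)·{ [γ²/(2τ) − (t + τ)]·exp(γ²/(4τ²))·[erf(γ/(2τ)) − erf(γ/(2τ) − t/γ)] − (γ/√π)·exp(γ²/(4τ²))·exp(−(t/γ − γ/(2τ))²) + γ/√π }. -/

import Mathlib

open Real intervalIntegral

/-- The error function. -/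
noncomputable def erf (x : ℝ) : ℝ :=
  (2 / Real.sqrt π) * ∫ t in (0:ℝ)..x, Real.exp (-t ^ 2)

lemma erf_zero : erf 0 = 0 := by simp [erf]

lemma erf_neg (x : ℝ) : erf (-x) = - erf x := by
  have h : ∫ s in (0:ℝ)..(-x), Real.exp (-s ^ 2) = - ∫ s in (0:ℝ)..x, Real.exp (-s ^ 2) := by
    have h1 : ∀ a b : ℝ, ∫ s in a..b, Real.exp (-s ^ 2)
        = ∫ s in a..b, (fun u : ℝ => Real.exp (-u ^ 2)) (-s) := by
      intro a b; congr 1; ext s; simp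
    rw [h1, intervalIntegral.integral_comp_neg (f := fun u : ℝ => Real.exp (-u ^ 2)),
      neg_zero, neg_neg, intervalIntegral.integral_symm]
  simp [erf, h]

lemma hasDerivAt_erf (x : ℝ) :
    HasDerivAt erf (2 / Real.sqrt π * Real.exp (-x ^ 2)) x := by
  have hc : Continuous fun t : ℝ => Real.exp (-t ^ 2) := by fun_prop
  have h := intervalIntegral.integral_hasDerivAt_right
    (hc.intervalIntegrable 0 x)
    (hc.stronglyMeasurableAtFilter _ _)
    hc.continuousAt
  exact h.const_mul (2 / Real.sqrt π)

lemma continuous_erf : Continuous erf :=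
  Differentiable.continuous (fun x => (hasDerivAt_erf x).differentiableAt)

/-- Antiderivative of `erf (l/γ) * ((t-l)/τ^2) * exp (-(t-l)/τ)` in `l`. -/
noncomputable def Gaux (γ τ t l : ℝ) : ℝ :=
  erf (l / γ) * ((t - l + τ) / τ) * Real.exp (-(t - l) / τ)
  - Real.exp (γ ^ 2 / (4 * τ ^ 2) - t / τ) *
      (((t + τ - γ ^ 2 / (2 * τ)) / τ) * erf (l / γ - γ / (2 * τ))
       + (γ / (τ * Real.sqrt π)) * Real.exp (-(l / γ - γ / (2 * τ)) ^ 2))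

lemma Gaux_deriv (γ τ t : ℝ) (hγ : γ ≠ 0) (hτ : τ ≠ 0) (l : ℝ) :
    HasDerivAt (Gaux γ τ t)
      (erf (l / γ) * ((t - l) / τ ^ 2) * Real.exp (-(t - l) / τ)) l := by
  have hπ : Real.sqrt π ≠ 0 := by positivity
  have h1 : HasDerivAt (fun x : ℝ => x / γ) (1 / γ) l := by
    simpa using (hasDerivAt_id l).div_const γ
  have herf1 : HasDerivAt (fun x : ℝ => erf (x / γ))
      (2 / Real.sqrt π * Real.exp (-(l / γ) ^ 2) * (1 / γ)) l := by
    have := (hasDerivAt_erf (l / γ)).comp l h1; exact this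
  have hH : HasDerivAt (fun x : ℝ => (t - x + τ) / τ) (-1 / τ) l := by
    have := (((hasDerivAt_id l).const_sub t).add_const τ).div_const τ
    simpa using this
  have hE1 : HasDerivAt (fun x : ℝ => Real.exp (-(t - x) / τ))
      (Real.exp (-(t - l) / τ) * (1 / τ)) l := by
    have hin : HasDerivAt (fun x : ℝ => -(t - x) / τ) (1 / τ) l := by
      have := (((hasDerivAt_id l).const_sub t).neg).div_const τ
      simpa using this
    simpa using hin.exp
  have hu : HasDerivAt (fun x : ℝ => x / γ - γ / (2 * τ)) (1 / γ) l :=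
    h1.sub_const _
  have herfu : HasDerivAt (fun x : ℝ => erf (x / γ - γ / (2 * τ)))
      (2 / Real.sqrt π * Real.exp (-(l / γ - γ / (2 * τ)) ^ 2) * (1 / γ)) l :=
    (hasDerivAt_erf _).comp l hu
  have hexpu : HasDerivAt (fun x : ℝ => Real.exp (-(x / γ - γ / (2 * τ)) ^ 2))
      (Real.exp (-(l / γ - γ / (2 * τ)) ^ 2) *
        (-(2 * (l / γ - γ / (2 * τ)) * (1 / γ)))) l := by
    have hin : HasDerivAt (fun x : ℝ => -(x / γ - γ / (2 * τ)) ^ 2)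
        (-(2 * (l / γ - γ / (2 * τ)) * (1 / γ))) l := by
      have := (hu.fun_pow 2).fun_neg
      simpa using this
    simpa using hin.exp
  have hfull := ((herf1.mul hH).mul hE1).sub
    (((herfu.const_mul ((t + τ - γ ^ 2 / (2 * τ)) / τ)).add
      (hexpu.const_mul (γ / (τ * Real.sqrt π)))).const_mul
        (Real.exp (γ ^ 2 / (4 * τ ^ 2) - t / τ)))
  have hG : HasDerivAt (Gaux γ τ t)
      ((2 / Real.sqrt π * Real.exp (-(l / γ) ^ 2) * (1 / γ) * ((t - l + τ) / τ)
          + erf (l / γ) * (-1 / τ)) * Real.exp (-(t - l) / τ)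
        + erf (l / γ) * ((t - l + τ) / τ) * (Real.exp (-(t - l) / τ) * (1 / τ))
        - Real.exp (γ ^ 2 / (4 * τ ^ 2) - t / τ) *
            (((t + τ - γ ^ 2 / (2 * τ)) / τ) *
                (2 / Real.sqrt π * Real.exp (-(l / γ - γ / (2 * τ)) ^ 2) * (1 / γ))
              + (γ / (τ * Real.sqrt π)) *
                (Real.exp (-(l / γ - γ / (2 * τ)) ^ 2) *
                  (-(2 * (l / γ - γ / (2 * τ)) * (1 / γ)))))) l := by
    exact hfull
  have hE : Real.exp (γ ^ 2 / (4 * τ ^ 2) - t / τ) *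
      Real.exp (-(l / γ - γ / (2 * τ)) ^ 2)
      = Real.exp (-(l / γ) ^ 2) * Real.exp (-(t - l) / τ) := by
    rw [← Real.exp_add, ← Real.exp_add]
    congr 1
    field_simp
    ring
  have hG2 : HasDerivAt (Gaux γ τ t)
      ((2 / Real.sqrt π * Real.exp (-(l / γ) ^ 2) * (1 / γ) * ((t - l + τ) / τ)
          + erf (l / γ) * (-1 / τ)) * Real.exp (-(t - l) / τ)
        + erf (l / γ) * ((t - l + τ) / τ) * (Real.exp (-(t - l) / τ) * (1 / τ))
        - Real.exp (γ ^ 2 / (4 * τ ^ 2) - t / τ) *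
            Real.exp (-(l / γ - γ / (2 * τ)) ^ 2) *
            (((t + τ - γ ^ 2 / (2 * τ)) / τ) * (2 / Real.sqrt π) * (1 / γ)
              - (γ / (τ * Real.sqrt π)) * (2 * (l / γ - γ / (2 * τ)) * (1 / γ)))) l := by
    convert hG using 1
    ring
  rw [hE] at hG2
  convert hG2 using 1
  field_simp
  ring

/-- Output of a second order linear filter, with impulse response
`h(t) = (t/τ²) e^{−t/τ}`, driven by the error function step signal `erf(t/γ)`. -/
theorem filter_output_erf_step (γ τ : ℝ) (hγ : 0 < γ) (hτ : 0 < τ) (t : ℝ) (ht : 0 ≤ t) :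
    ∫ l in (0:ℝ)..t, erf (l / γ) * ((t - l) / τ ^ 2) * Real.exp (-(t - l) / τ) =
      erf (t / γ) +
        (Real.exp (-t / τ) / τ) *
          ((γ ^ 2 / (2 * τ) - (t + τ)) * Real.exp (γ ^ 2 / (4 * τ ^ 2)) *
              (erf (γ / (2 * τ)) - erf (γ / (2 * τ) - t / γ)) -
            (γ / Real.sqrt π) * Real.exp (γ ^ 2 / (4 * τ ^ 2)) *
              Real.exp (-(t / γ - γ / (2 * τ)) ^ 2) +
            γ / Real.sqrt π) := by
  have hπ : Real.sqrt π ≠ 0 := by positivity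
  have hcont : Continuous fun l : ℝ =>
      erf (l / γ) * ((t - l) / τ ^ 2) * Real.exp (-(t - l) / τ) := by
    apply Continuous.mul
    · exact (continuous_erf.comp (continuous_id.div_const γ)).mul
        ((continuous_const.sub continuous_id).div_const (τ ^ 2))
    · exact Real.continuous_exp.comp
        (((continuous_const.sub continuous_id).neg).div_const τ)
  have hFTC : ∫ l in (0:ℝ)..t, erf (l / γ) * ((t - l) / τ ^ 2) * Real.exp (-(t - l) / τ)
      = Gaux γ τ t t - Gaux γ τ t 0 :=
    intervalIntegral.integral_eq_sub_of_hasDerivAt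
      (fun x _ => Gaux_deriv γ τ t hγ.ne' hτ.ne' x)
      (hcont.intervalIntegrable 0 t)
  rw [hFTC]
  simp only [Gaux]
  have e1 : Real.exp (-(t - t) / τ) = 1 := by norm_num
  have e2 : erf ((0:ℝ) / γ) = 0 := by rw [zero_div, erf_zero]
  have e3 : erf ((0:ℝ) / γ - γ / (2 * τ)) = - erf (γ / (2 * τ)) := by
    rw [zero_div, zero_sub, erf_neg]
  have e4 : erf (γ / (2 * τ) - t / γ) = - erf (t / γ - γ / (2 * τ)) := by
    rw [show γ / (2 * τ) - t / γ = -(t / γ - γ / (2 * τ)) from by ring, erf_neg]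
  have e5 : Real.exp (γ ^ 2 / (4 * τ ^ 2) - t / τ)
      = Real.exp (γ ^ 2 / (4 * τ ^ 2)) * Real.exp (-t / τ) := by
    rw [← Real.exp_add]; congr 1; ring
  have e6 : Real.exp (-((0:ℝ) / γ - γ / (2 * τ)) ^ 2)
      = Real.exp (-(γ ^ 2 / (4 * τ ^ 2))) := by
    congr 1
    field_simp
    ring
  have e7 : Real.exp (γ ^ 2 / (4 * τ ^ 2)) * Real.exp (-(γ ^ 2 / (4 * τ ^ 2))) = 1 := by
    rw [← Real.exp_add]; simp
  rw [e1, e2, e3, e4, e5, e6]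
  linear_combination (norm := (field_simp; ring))
    (Real.exp (-t / τ) * γ * τ / (τ ^ 2 * Real.sqrt π)) * e7
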